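/- Let I = [0,1] be the unit interval with the metric induced from ℝ. For every compact subset K ⊂ (0,∞) and every ε > 0 there exists δ > 0 such that: for every finite nonempty subset A ⊆ I whose Hausdorff distance from I satisfies d_H(A, I) < δ, and every t ∈ K, one has |(1 + t) − |tA|_Rips| < ε. In other words, |tA|_Rips → 1 + t as A → I in the Hausdorff metric, uniformly on compact subsets of (0,∞). -/

import Mathlib

open scoped BigOperators

/-- The Rips magnitude function of a finite subset `A` of a metric space:
`|tA|_Rips = Σ_{∅ ≠ B ⊆ A} (−1)^{#B−1} e^{−diam(B)·t}`. -/
noncomputable def ripsMag {Y : Type*} [MetricSpace Y] (A : Finset Y) (t : ℝ) : ℝ :=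
  ∑ B ∈ A.powerset.filter (fun B => B.Nonempty),
    (-1 : ℝ) ^ (B.card - 1) * Real.exp (-(Metric.diam (B : Set Y)) * t)
lemma filt {α : Type*} [DecidableEq α] (s : Finset α) (f : Finset α → ℝ) :
    ∑ B ∈ s.powerset.filter (fun B => B.Nonempty), f B = ∑ B ∈ s.powerset, f B - f ∅ := by
  have h : s.powerset = insert ∅ (s.powerset.filter (fun B => B.Nonempty)) := by
    ext B
    simp only [Finset.mem_insert, Finset.mem_filter, Finset.mem_powerset,
      Finset.nonempty_iff_ne_empty]
    constructor
    · intro hB; by_cases hBe : B = ∅ <;> tauto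
    · rintro (rfl | ⟨h1, _⟩); · exact Finset.empty_subset s
      · exact h1
  conv_rhs => rw [h, Finset.sum_insert (by simp)]
  ring
lemma diam_finset (B : Finset ℝ) (h : B.Nonempty) :
    Metric.diam (B : Set ℝ) = B.max' h - B.min' h := by
  apply le_antisymm
  · apply Metric.diam_le_of_forall_dist_le (by linarith [B.min'_le _ (B.max'_mem h)])
    intro x hx y hy
    rw [Real.dist_eq, abs_le]
    constructor <;>
      · have h1 := B.min'_le x hx; have h2 := B.le_max' x hx
        have h3 := B.min'_le y hy; have h4 := B.le_max' y hy
        linarith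
  · have := Metric.dist_le_diam_of_mem (s := (B : Set ℝ)) (B.finite_toSet.isBounded)
      (by simpa using B.max'_mem h) (by simpa using B.min'_mem h)
    rw [Real.dist_eq] at this
    have h1 := B.min'_le _ (B.max'_mem h)
    rwa [abs_of_nonneg (by linarith)] at this

lemma diam_insert_of_le (x : ℝ) (C : Finset ℝ) (hC : C.Nonempty) (hx : ∀ c ∈ C, x ≤ c) :
    Metric.diam ((insert x C : Finset ℝ) : Set ℝ) = C.max' hC - x := by
  rw [diam_finset _ (Finset.insert_nonempty x C), Finset.max'_insert x C hC, Finset.min'_insert x C hC]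
  have h1 : x ≤ C.max' hC := hx _ (C.max'_mem hC)
  have h2 : x ≤ C.min' hC := hx _ (C.min'_mem hC)
  rw [max_eq_right h1, min_eq_left h2]
lemma ripsInnerSum (x : ℝ) (A : Finset ℝ) (hA : A.Nonempty) (hx : ∀ a ∈ A, x < a) (t : ℝ) :
    ∑ B ∈ A.powerset.filter (fun B => B.Nonempty),
      (-1:ℝ)^B.card * Real.exp (-(Metric.diam ((insert x B : Finset ℝ) : Set ℝ)) * t)
      = - Real.exp (-(A.min' hA - x) * t) := by
  set f : Finset ℝ → ℝ :=
    fun B => (-1:ℝ)^B.card * Real.exp (-(Metric.diam ((insert x B : Finset ℝ) : Set ℝ)) * t)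
    with hf
  set m := A.min' hA with hm
  have hmA : m ∈ A := A.min'_mem hA
  have hA' : A = insert m (A.erase m) := (Finset.insert_erase hmA).symm
  set A' := A.erase m with hA'def
  have hmA' : m ∉ A' := Finset.notMem_erase m A
  have hlt : ∀ a ∈ A', m < a := fun a ha => by
    rcases Finset.mem_erase.mp ha with ⟨hne, haA⟩
    exact lt_of_le_of_ne (A.min'_le a haA) (Ne.symm hne)
  have key : ∀ B ∈ A'.powerset.filter (fun B => B.Nonempty), f (insert m B) = - f B := by
    intro B hB
    rw [Finset.mem_filter, Finset.mem_powerset] at hB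
    obtain ⟨hBsub, hBne⟩ := hB
    have hmB : m ∉ B := fun h => hmA' (hBsub h)
    have hxm : x < m := hx m hmA
    have hxB : ∀ c ∈ B, x ≤ c := fun c hc => le_of_lt (hx c (Finset.mem_of_mem_erase (hBsub hc)))
    have hmax : (insert m B).max' (Finset.insert_nonempty m B) = B.max' hBne := by
      apply le_antisymm
      · apply Finset.max'_le
        intro y hy
        rcases Finset.mem_insert.mp hy with rfl | hy
        · exact (hlt _ (hBsub (B.max'_mem hBne))).le
        · exact B.le_max' y hy
      · exact Finset.le_max' _ _ (Finset.mem_insert_of_mem (B.max'_mem hBne))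
    have hd1 : Metric.diam ((insert x (insert m B) : Finset ℝ) : Set ℝ) = B.max' hBne - x := by
      rw [diam_insert_of_le x (insert m B) (Finset.insert_nonempty m B)
        (fun c hc => by rcases Finset.mem_insert.mp hc with rfl | hc
                        · exact le_of_lt hxm
                        · exact hxB c hc), hmax]
    have hd2 : Metric.diam ((insert x B : Finset ℝ) : Set ℝ) = B.max' hBne - x :=
      diam_insert_of_le x B hBne hxB
    have hcard : (insert m B).card = B.card + 1 := Finset.card_insert_of_notMem hmB
    rw [hf]
    simp only [hcard, hd1, hd2, pow_succ]
    ring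
  have hsum_cancel : ∑ B ∈ A'.powerset.filter (fun B => B.Nonempty), f (insert m B)
      = - ∑ B ∈ A'.powerset.filter (fun B => B.Nonempty), f B := by
    rw [← Finset.sum_neg_distrib]
    exact Finset.sum_congr rfl (fun B hB => by rw [key B hB])
  have hstep : ∑ B ∈ A.powerset.filter (fun B => B.Nonempty), f B
      = ∑ B ∈ A.powerset, f B - f ∅ := filt A f
  have hstep2 : ∑ B ∈ A.powerset, f B
      = ∑ B ∈ A'.powerset, f B + ∑ B ∈ A'.powerset, f (insert m B) := by
    conv_lhs => rw [hA']
    exact Finset.sum_powerset_insert hmA' f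
  have hstep3 : ∑ B ∈ A'.powerset, f (insert m B)
      = (∑ B ∈ A'.powerset.filter (fun B => B.Nonempty), f (insert m B)) + f (insert m ∅) := by
    rw [filt A' (fun B => f (insert m B))]; ring
  have hstep4 : ∑ B ∈ A'.powerset, f B
      = (∑ B ∈ A'.powerset.filter (fun B => B.Nonempty), f B) + f ∅ := by
    rw [filt A' f]; ring
  have hfm : f (insert m ∅) = - Real.exp (-(m - x) * t) := by
    have h0 : insert m (∅ : Finset ℝ) = {m} := by simp
    simp only [hf, h0]
    rw [diam_insert_of_le x {m} (Finset.singleton_nonempty m)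
      (fun c hc => by rw [Finset.mem_singleton] at hc; subst hc; exact (hx m hmA).le)]
    simp [Finset.max'_singleton]
  rw [hstep, hstep2, hstep3, hstep4, hsum_cancel, hfm]
  ring
lemma ripsMag_insert (x : ℝ) (A : Finset ℝ) (hA : A.Nonempty) (hx : ∀ a ∈ A, x < a) (t : ℝ) :
    ripsMag (insert x A) t = ripsMag A t + 1 - Real.exp (-(A.min' hA - x) * t) := by
  have hxA : x ∉ A := fun h => lt_irrefl x (hx x h)
  set G : Finset ℝ → ℝ :=
    fun B => (-1 : ℝ) ^ (B.card - 1) * Real.exp (-(Metric.diam (B : Set ℝ)) * t) with hG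
  have hGempty : G ∅ = 1 := by simp [hG]
  have hGx : G {x} = 1 := by simp [hG]
  have hmain : ∑ B ∈ A.powerset.filter (fun B => B.Nonempty), G (insert x B)
      = - Real.exp (-(A.min' hA - x) * t) := by
    rw [← ripsInnerSum x A hA hx t]
    apply Finset.sum_congr rfl
    intro B hB
    rw [Finset.mem_filter, Finset.mem_powerset] at hB
    have hxB : x ∉ B := fun h => hxA (hB.1 h)
    simp only [hG, Finset.card_insert_of_notMem hxB, Nat.add_sub_cancel]
  show (∑ B ∈ (insert x A).powerset.filter (fun B => B.Nonempty), G B) = _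
  rw [filt, Finset.sum_powerset_insert hxA]
  have h1 : ∑ B ∈ A.powerset, G B
      = (∑ B ∈ A.powerset.filter (fun B => B.Nonempty), G B) + G ∅ := by rw [filt]; ring
  have h2 : ∑ B ∈ A.powerset, G (insert x B)
      = (∑ B ∈ A.powerset.filter (fun B => B.Nonempty), G (insert x B)) + G (insert x ∅) := by
    rw [filt A (fun B => G (insert x B))]; ring
  have h3 : insert x (∅ : Finset ℝ) = {x} := by simp
  have h4 : ripsMag A t = ∑ B ∈ A.powerset.filter (fun B => B.Nonempty), G B := rfl
  rw [h1, h2, hmain, hGempty, h3, hGx, h4]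
  ring
noncomputable def gapSum : List ℝ → ℝ → ℝ
  | a :: b :: r, t => (1 - Real.exp (-(b - a) * t)) + gapSum (b :: r) t
  | _, _ => 0
lemma ripsMag_singleton (a t : ℝ) : ripsMag ({a} : Finset ℝ) t = 1 := by
  have h : ({a} : Finset ℝ).powerset.filter (fun B => B.Nonempty) = {{a}} := by
    ext B
    simp only [Finset.mem_filter, Finset.mem_powerset, Finset.mem_singleton,
      Finset.subset_singleton_iff, Finset.nonempty_iff_ne_empty]
    constructor
    · rintro ⟨(rfl | rfl), h2⟩
      · exact absurd rfl h2
      · rfl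
    · rintro rfl
      exact ⟨Or.inr rfl, Finset.singleton_ne_empty a⟩
  rw [ripsMag, h]
  simp

lemma ripsMag_sorted (l : List ℝ) (hl : l.Pairwise (· < ·)) (hne : l ≠ []) (t : ℝ) :
    ripsMag l.toFinset t = 1 + gapSum l t := by
  induction l with
  | nil => exact absurd rfl hne
  | cons a r ih =>
    match r with
    | [] =>
      simp only [List.toFinset_cons, List.toFinset_nil, LawfulSingleton.insert_empty_eq]
      rw [ripsMag_singleton]
      simp [gapSum]
    | b :: r' =>
      have hl' : (b :: r').Pairwise (· < ·) := hl.of_cons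
      have hmem : ∀ c ∈ (b :: r').toFinset, a < c := by
        intro c hc
        rw [List.mem_toFinset] at hc
        exact (List.pairwise_cons.mp hl).1 c hc
      have hne' : ((b :: r').toFinset).Nonempty := ⟨b, by simp⟩
      have hmin : (b :: r').toFinset.min' hne' = b := by
        apply le_antisymm
        · exact Finset.min'_le _ b (by simp)
        · apply Finset.le_min'
          intro y hy
          rw [List.mem_toFinset, List.mem_cons] at hy
          rcases hy with rfl | hy
          · exact le_refl y
          · exact ((List.pairwise_cons.mp hl').1 y hy).le
      rw [List.toFinset_cons, ripsMag_insert a _ hne' hmem t, ih hl' (by simp), hmin]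
      show 1 + gapSum (b :: r') t + 1 - Real.exp (-(b - a) * t)
        = 1 + ((1 - Real.exp (-(b - a) * t)) + gapSum (b :: r') t)
      ring
lemma gapSum_bounds (t c : ℝ) (ht : 0 ≤ t) :
    ∀ (r : List ℝ) (a : ℝ), List.Chain' (fun u v : ℝ => u ≤ v ∧ v - u ≤ c) (a :: r) →
      Real.exp (-(c * t)) * (t * ((a :: r).getLast (by simp) - a)) ≤ gapSum (a :: r) t ∧
      gapSum (a :: r) t ≤ t * ((a :: r).getLast (by simp) - a) := by
  intro r
  induction r with
  | nil => intro a _; simp [gapSum]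
  | cons b r' ih =>
    intro a hchain
    obtain ⟨⟨hab, habc⟩, hch'⟩ := List.isChain_cons_cons.mp hchain
    obtain ⟨ih1, ih2⟩ := ih b hch'
    have hlast : (a :: b :: r').getLast (by simp) = (b :: r').getLast (by simp) :=
      List.getLast_cons (by simp)
    have hgap : gapSum (a :: b :: r') t
        = (1 - Real.exp (-(b - a) * t)) + gapSum (b :: r') t := rfl
    set u : ℝ := (b - a) * t with hu
    have hu0 : 0 ≤ u := mul_nonneg (by linarith) ht
    have huct : u ≤ c * t := by nlinarith
    have hexp1 : Real.exp (-u) * Real.exp u = 1 := by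
      rw [← Real.exp_add]; simp
    have hupper : 1 - Real.exp (-u) ≤ u := by
      nlinarith [Real.add_one_le_exp (-u)]
    have hlow1 : u * Real.exp (-u) ≤ 1 - Real.exp (-u) := by
      nlinarith [Real.add_one_le_exp u, Real.exp_pos (-u)]
    have hlow2 : Real.exp (-(c * t)) ≤ Real.exp (-u) :=
      Real.exp_le_exp.mpr (by linarith)
    have hlow : Real.exp (-(c * t)) * u ≤ 1 - Real.exp (-u) := by
      calc Real.exp (-(c * t)) * u ≤ Real.exp (-u) * u :=
            mul_le_mul_of_nonneg_right hlow2 hu0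
        _ = u * Real.exp (-u) := by ring
        _ ≤ _ := hlow1
    rw [hlast, hgap]
    constructor
    · have : Real.exp (-(c * t)) * (t * ((b :: r').getLast (by simp) - a))
          = Real.exp (-(c * t)) * u + Real.exp (-(c * t)) * (t * ((b :: r').getLast (by simp) - b)) := by
        rw [hu]; ring
      rw [this]
      have h1 : -u = -(b - a) * t := by rw [hu]; ring
      rw [← h1]
      linarith
    · have h1 : -u = -(b - a) * t := by rw [hu]; ring
      rw [← h1]
      have : t * ((b :: r').getLast (by simp) - a)
          = u + t * ((b :: r').getLast (by simp) - b) := by rw [hu]; ring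
      rw [this]
      linarith
lemma sorted_le_getLast (l : List ℝ) (hs : l.Pairwise (· < ·)) (h : l ≠ []) (y : ℝ)
    (hy : y ∈ l) : y ≤ l.getLast h := by
  obtain ⟨j, rfl⟩ := List.mem_iff_get.mp hy
  rw [List.getLast_eq_getElem]
  have hp := List.pairwise_iff_get.mp hs
  rcases Nat.lt_or_ge (j : ℕ) (l.length - 1) with hj | hj
  · exact (hp j ⟨l.length - 1, by omega⟩ (by simpa [Fin.lt_def] using hj)).le
  · have hje : (j : ℕ) = l.length - 1 := by have := j.isLt; omega
    exact le_of_eq (congrArg l.get (Fin.ext hje))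
set_option maxHeartbeats 1000000 in
/-- `|tA|_Rips → 1 + t` as the finite set `A ⊆ [0,1]` converges to
`[0,1]` in the Hausdorff metric, uniformly for `t` in compact subsets of `(0,∞)`. -/
theorem ripsMag_unitInterval_hausdorff_limit
    (K : Set ℝ) (hK : IsCompact K) (hKpos : K ⊆ Set.Ioi (0 : ℝ))
    (ε : ℝ) (hε : 0 < ε) :
    ∃ δ : ℝ, 0 < δ ∧
      ∀ A : Finset ℝ, (A : Set ℝ) ⊆ Set.Icc (0 : ℝ) 1 → A.Nonempty →
        Metric.hausdorffDist (A : Set ℝ) (Set.Icc (0 : ℝ) 1) < δ →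
        ∀ t ∈ K, |(1 + t) - ripsMag A t| < ε := by
  obtain ⟨M0, hM0⟩ := hK.isBounded.subset_closedBall 0
  set M : ℝ := max M0 1 with hM
  have hM1 : (1 : ℝ) ≤ M := le_max_right _ _
  have htM : ∀ t ∈ K, t ≤ M := by
    intro t htK
    have := hM0 htK
    rw [Metric.mem_closedBall, Real.dist_eq, sub_zero] at this
    exact le_trans (le_trans (le_abs_self t) this) (le_max_left _ _)
  set δ : ℝ := ε / (2 * M * (M + 1) + 1) with hδ
  have hD : (0 : ℝ) < 2 * M * (M + 1) + 1 := by nlinarith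
  have hδpos : 0 < δ := div_pos hε hD
  have hδD : δ * (2 * M * (M + 1) + 1) = ε := div_mul_cancel₀ ε (ne_of_gt hD)
  refine ⟨δ, hδpos, ?_⟩
  intro A hsub hne hdist t htK
  have ht0 : 0 < t := hKpos htK
  have htM' : t ≤ M := htM t htK
  set l := A.sort (· ≤ ·) with hl
  have hsort : l.Pairwise (· < ·) := (Finset.sortedLT_sort A).pairwise
  have hltf : l.toFinset = A := Finset.sort_toFinset A _
  have hmem : ∀ y : ℝ, y ∈ l ↔ y ∈ A := fun y => Finset.mem_sort _
  have hlne : l ≠ [] := by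
    obtain ⟨a, ha⟩ := hne
    exact List.ne_nil_of_mem ((hmem a).mpr ha)
  have hAne : (A : Set ℝ).Nonempty := Finset.coe_nonempty.mpr hne
  have hfin : EMetric.hausdorffEdist (Set.Icc (0:ℝ) 1) (A : Set ℝ) ≠ ⊤ :=
    Metric.hausdorffEdist_ne_top_of_nonempty_of_bounded ⟨0, by norm_num⟩ hAne
      (Metric.isBounded_Icc 0 1) A.finite_toSet.isBounded
  have hKey : ∀ z ∈ Set.Icc (0:ℝ) 1, ∃ y ∈ A, dist z y < δ := by
    intro z hz
    have h1 : Metric.infDist z (A : Set ℝ)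
        ≤ Metric.hausdorffDist (Set.Icc (0:ℝ) 1) (A : Set ℝ) :=
      Metric.infDist_le_hausdorffDist_of_mem hz hfin
    rw [Metric.hausdorffDist_comm] at h1
    obtain ⟨y, hy, hyd⟩ := (Metric.infDist_lt_iff hAne).mp (lt_of_le_of_lt h1 hdist)
    exact ⟨y, hy, hyd⟩
  -- the chain condition
  have hp := List.pairwise_iff_get.mp hsort
  have hchain : l.Chain' (fun u v : ℝ => u ≤ v ∧ v - u ≤ 2 * δ) := by
    refine List.isChain_iff_getElem.mpr ?_
    intro i hi
    have hi1 : i + 1 < l.length := by omega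
    have hi0 : i < l.length := by omega
    show l.get ⟨i, hi0⟩ ≤ l.get ⟨i + 1, hi1⟩ ∧ l.get ⟨i + 1, hi1⟩ - l.get ⟨i, hi0⟩ ≤ 2 * δ
    set a := l.get ⟨i, hi0⟩ with ha
    set b := l.get ⟨i + 1, hi1⟩ with hb
    have hab : a < b := hp ⟨i, hi0⟩ ⟨i + 1, hi1⟩ (by simp [Fin.lt_def])
    refine ⟨hab.le, ?_⟩
    have haA : a ∈ A := (hmem a).mp (l.get_mem _)
    have hbA : b ∈ A := (hmem b).mp (l.get_mem _)
    have haI := hsub haA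
    have hbI := hsub hbA
    have hmI : (a + b) / 2 ∈ Set.Icc (0:ℝ) 1 :=
      Set.mem_Icc.mpr ⟨by linarith [haI.1, hbI.1], by linarith [haI.2, hbI.2]⟩
    obtain ⟨y, hyA, hyd⟩ := hKey _ hmI
    obtain ⟨j, hjy⟩ := List.mem_iff_get.mp ((hmem y).mpr hyA)
    rw [Real.dist_eq] at hyd
    have habs := abs_lt.mp hyd
    rcases Nat.lt_or_ge (j : ℕ) (i + 1) with hj | hj
    · have hya : y ≤ a := by
        rcases Nat.lt_or_ge (j : ℕ) i with hji | hji
        · rw [← hjy]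
          exact (hp j ⟨i, hi0⟩ (by simpa [Fin.lt_def] using hji)).le
        · have : (j : ℕ) = i := by omega
          rw [← hjy, ha]
          exact le_of_eq (congrArg l.get (Fin.ext this))
      linarith [habs.2]
    · have hby : b ≤ y := by
        rcases Nat.lt_or_ge (i + 1) (j : ℕ) with hji | hji
        · rw [← hjy]
          exact (hp ⟨i + 1, hi1⟩ j (by simpa [Fin.lt_def] using hji)).le
        · have : (j : ℕ) = i + 1 := by omega
          rw [← hjy, hb]
          exact le_of_eq (congrArg l.get (Fin.ext this.symm))
      linarith [habs.1]
  obtain ⟨a₀, r, hcons⟩ : ∃ a r, l = a :: r := by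
    cases hc : l with
    | nil => exact absurd hc hlne
    | cons a r => exact ⟨a, r, rfl⟩
  -- head and last bounds
  have ha₀A : a₀ ∈ A := (hmem a₀).mp (by rw [hcons]; simp)
  have hL : (a₀ :: r).getLast (by simp) = l.getLast hlne := by
    congr 1; exact hcons.symm
  have hlastA : l.getLast hlne ∈ A := (hmem _).mp (List.getLast_mem hlne)
  have ha₀small : a₀ < δ := by
    obtain ⟨y, hyA, hyd⟩ := hKey 0 (by norm_num)
    have hy0 : 0 ≤ y := (hsub hyA).1
    rw [Real.dist_eq] at hyd
    have : y < δ := by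
      have := abs_lt.mp hyd; linarith [this.1]
    have ha₀y : a₀ ≤ y := by
      have hyl : y ∈ l := (hmem y).mpr hyA
      rw [hcons] at hyl hsort
      rcases List.mem_cons.mp hyl with rfl | hyr
      · exact le_refl _
      · exact ((List.pairwise_cons.mp hsort).1 y hyr).le
    linarith
  have hlast_big : 1 - δ < l.getLast hlne := by
    obtain ⟨y, hyA, hyd⟩ := hKey 1 (by norm_num)
    have hy1 : y ≤ 1 := (hsub hyA).2
    rw [Real.dist_eq] at hyd
    have h1 : 1 - δ < y := by
      have := abs_lt.mp hyd; linarith [this.2]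
    have h2 : y ≤ l.getLast hlne :=
      sorted_le_getLast l hsort hlne y ((hmem y).mpr hyA)
    linarith
  have ha₀0 : 0 ≤ a₀ := (hsub ha₀A).1
  have hlast1 : l.getLast hlne ≤ 1 := (hsub hlastA).2
  -- apply bounds
  have hchain' : List.Chain' (fun u v : ℝ => u ≤ v ∧ v - u ≤ 2 * δ) (a₀ :: r) := by
    rw [← hcons]; exact hchain
  obtain ⟨hlow, hup⟩ := gapSum_bounds t (2 * δ) ht0.le r a₀ hchain'
  rw [hL] at hlow hup
  -- formula
  have hform : ripsMag A t = 1 + gapSum l t := by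
    rw [← hltf]; exact ripsMag_sorted l hsort hlne t
  have hgl : gapSum l t = gapSum (a₀ :: r) t := by rw [hcons]
  set g : ℝ := gapSum (a₀ :: r) t with hg
  set Lst : ℝ := l.getLast hlne with hLst
  -- numeric part
  have hE0 : 0 < Real.exp (-(2 * δ * t)) := Real.exp_pos _
  have hE1 : Real.exp (-(2 * δ * t)) ≤ 1 :=
    Real.exp_le_one_iff.mpr (by nlinarith)
  have h1mE : 1 - Real.exp (-(2 * δ * t)) ≤ 2 * δ * t := by
    nlinarith [Real.add_one_le_exp (-(2 * δ * t))]
  have hub : t - g ≤ 2 * δ * t * (t + 1) := by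
    have hLlb : 1 - 2 * δ ≤ Lst - a₀ := by linarith
    have step1 : Real.exp (-(2 * δ * t)) * (t * (1 - 2 * δ))
        ≤ Real.exp (-(2 * δ * t)) * (t * (Lst - a₀)) := by
      apply mul_le_mul_of_nonneg_left _ hE0.le
      exact mul_le_mul_of_nonneg_left hLlb ht0.le
    have step2 : Real.exp (-(2 * δ * t)) * (t * (1 - 2 * δ)) ≤ g := le_trans step1 hlow
    nlinarith [step2]
  have hlb : 0 ≤ t - g := by
    have : g ≤ t * (Lst - a₀) := hup
    nlinarith [this]
  have habsg : |(1 + t) - ripsMag A t| = t - g := by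
    rw [hform, hgl]
    rw [abs_of_nonneg (by linarith)]
    ring
  rw [habsg]
  have hfinal : 2 * δ * t * (t + 1) < ε := by
    have hδt : δ * t ≤ δ * M := mul_le_mul_of_nonneg_left htM' hδpos.le
    have hδt2 : δ * (t * t) ≤ δ * (M * M) :=
      mul_le_mul_of_nonneg_left (mul_self_le_mul_self ht0.le htM') hδpos.le
    have h1 : 2 * δ * t * (t + 1) ≤ 2 * δ * M * (M + 1) := by nlinarith
    have h2 : 2 * δ * M * (M + 1) < δ * (2 * M * (M + 1) + 1) := by nlinarith
    linarith [hδD ▸ h2]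
  linarith
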